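/- Let n ≥ 2, let c be a coloring of n strands and set t = t_{c_n}. Suppose A is an (n−1)×(n−1) matrix over Λ_μ and v is a row vector of length n−1 over Λ_μ such that (A, v) satisfies the boundary relation for c. Let M = [[A,0],[v,1]] and let G be the n×n matrix equal to the identity except in its last 2×2 diagonal block, which equals [[1, t],[0, −t]] (G is the reduced colored Gassner matrix of the stabilizing generator σ_n for the coloring (c_1,…,c_n,c_n) of n+1 strands). Then (T^c_n − 1) · det(M·G − I_n) = (1 − T^c_{n−1}·t²) · det(A − I_{n−1}). (This is the determinant identity establishing invariance of the paper's invariant f under the positive second colored Markov move.) -/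

import Mathlib

noncomputable section

open scoped BigOperators

/-- The multivariable Laurent polynomial ring `Λ_μ = ℤ[t₁^{±1},…,t_μ^{±1}]`,
realized as the group ℤ-algebra of `ℤ^μ`. -/
abbrev Lau (μ : ℕ) : Type := AddMonoidAlgebra ℤ (Fin μ →₀ ℤ)

instance (μ : ℕ) : IsDomain (Lau μ) := NoZeroDivisors.to_isDomain _

/-- The distinguished unit `t_i` of `Λ_μ`. -/
def tU {μ : ℕ} (i : Fin μ) : (Lau μ)ˣ where
  val := AddMonoidAlgebra.single (Finsupp.single i 1) 1
  inv := AddMonoidAlgebra.single (Finsupp.single i (-1)) 1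
  val_inv := by
    rw [AddMonoidAlgebra.single_mul_single, ← Finsupp.single_add]
    norm_num; rfl
  inv_val := by
    rw [AddMonoidAlgebra.single_mul_single, ← Finsupp.single_add]
    norm_num; rfl

/-- `T^c_i = t_{c_1} ⋯ t_{c_i}` (product of the first `i` values of the coloring,
zero-indexed: product over indices `k ≤ i`), as a unit of `Λ_μ`. -/
def TU {μ n : ℕ} (c : Fin n → Fin μ) (i : Fin n) : (Lau μ)ˣ :=
  ∏ k ∈ Finset.Iic i, tU (c k)

/-- The `n×n` matrix `[[A,0],[v,1]]` built from an `(n−1)×(n−1)` matrix `A`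
and a row vector `v` of length `n−1` (here `n = l+2`): the upper-left block is `A`,
the last column is `(0,…,0,1)ᵀ` and the last row begins with `v`. -/
def aug {μ l : ℕ} (A : Matrix (Fin (l+1)) (Fin (l+1)) (Lau μ)) (v : Fin (l+1) → Lau μ) :
    Matrix (Fin (l+2)) (Fin (l+2)) (Lau μ) := fun i j =>
  if hi : (i : ℕ) < l + 1 then
    if hj : (j : ℕ) < l + 1 then A ⟨i, hi⟩ ⟨j, hj⟩ else 0
  else
    if hj : (j : ℕ) < l + 1 then v ⟨j, hj⟩ else 1

/-- The pair `(A, v)` satisfies the boundary relation for the coloring `c`: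
for every column `j`, `∑_{i=1}^{n−1} (T^c_i − 1)(A − I)_{ij} = −(T^c_n − 1) v_j`. -/
def BoundaryRel {μ l : ℕ} (c : Fin (l+2) → Fin μ) (A : Matrix (Fin (l+1)) (Fin (l+1)) (Lau μ))
    (v : Fin (l+1) → Lau μ) : Prop :=
  ∀ j : Fin (l+1), ∑ i : Fin (l+1),
      ((TU c i.castSucc : Lau μ) - 1) * (A - 1) i j
    = -((TU c (Fin.last (l+1)) : Lau μ) - 1) * v j

/-- The `(l+2)×(l+2)` matrix equal to the identity except in its last `2×2`
diagonal block, which is `[[a,b],[c,d]]`. -/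
def last2Block {μ : ℕ} (l : ℕ) (a b c d : Lau μ) :
    Matrix (Fin (l+2)) (Fin (l+2)) (Lau μ) := fun i j =>
  if (i : ℕ) = l ∧ (j : ℕ) = l then a
  else if (i : ℕ) = l ∧ (j : ℕ) = l + 1 then b
  else if (i : ℕ) = l + 1 ∧ (j : ℕ) = l then c
  else if (i : ℕ) = l + 1 ∧ (j : ℕ) = l + 1 then d
  else if i = j then 1 else 0


open Matrix in
private lemma det_updateRow_add_sum_smul' {n ι R : Type*} [CommRing R] [DecidableEq n] [Fintype n]
    (M : Matrix n n R) (k : n) (s : Finset ι) (cc : ι → R) (f : ι → n)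
    (hf : ∀ i ∈ s, f i ≠ k) (u : n → R) :
    (M.updateRow k (u + ∑ i ∈ s, cc i • M (f i))).det = (M.updateRow k u).det := by
  classical
  induction s using Finset.induction_on generalizing u with
  | empty => simp
  | insert a s' ha ih =>
      rw [Finset.sum_insert ha, ← add_assoc,
        ih (fun i hi => hf i (Finset.mem_insert_of_mem hi)),
        Matrix.det_updateRow_add, Matrix.det_updateRow_smul,
        Matrix.det_updateRow_eq_zero (hf a (Finset.mem_insert_self a s')), mul_zero, add_zero]

private lemma TU_last_eq {μ l : ℕ} (c : Fin (l+2) → Fin μ) :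
    (TU c (Fin.last (l+1)) : (Lau μ)ˣ)
      = TU c ((Fin.last l).castSucc) * tU (c (Fin.last (l+1))) := by
  have h1 : (Finset.Iic (Fin.last (l+1)) : Finset (Fin (l+2))) = Finset.univ := by
    ext k; simp [Fin.le_last]
  have h2 : (Finset.Iic ((Fin.last l).castSucc) : Finset (Fin (l+2)))
      = Finset.univ.map ⟨Fin.castSucc, Fin.castSucc_injective _⟩ := by
    ext k
    simp only [Finset.mem_Iic, Finset.mem_map, Finset.mem_univ, true_and,
      Function.Embedding.coeFn_mk, Fin.le_def, Fin.coe_castSucc, Fin.val_last]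
    constructor
    · intro h; exact ⟨⟨(k : ℕ), by omega⟩, by ext; simp⟩
    · rintro ⟨a, rfl⟩; simpa using a.is_le
  rw [TU, TU, h1, h2, Finset.prod_map, Fin.prod_univ_castSucc]
  rfl

private lemma stmt4_aux {μ l : ℕ} (c : Fin (l+2) → Fin μ) (t Tn Tl : Lau μ)
    (A : Matrix (Fin (l+1)) (Fin (l+1)) (Lau μ)) (v : Fin (l+1) → Lau μ)
    (hb : ∀ j : Fin (l+1), ∑ i : Fin (l+1),
      ((TU c i.castSucc : Lau μ) - 1) * (A - 1) i j = -(Tn - 1) * v j)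
    (hTl : Tl = (TU c ((Fin.last l).castSucc) : Lau μ))
    (hprod : Tn = Tl * t)
    (w : Matrix (Fin (l+1)) (Fin 1) (Lau μ)) (hw : w = fun i _ => if i = Fin.last l then t else 0)
    (vR : Matrix (Fin 1) (Fin (l+1)) (Lau μ)) (hvR : vR = fun _ j => v j)
    (sB : Matrix (Fin 1) (Fin 1) (Lau μ)) (hsB : sB = fun _ _ => v (Fin.last l) * t - t - 1)
    (N : Matrix (Fin (l+1) ⊕ Fin 1) (Fin (l+1) ⊕ Fin 1) (Lau μ))
    (hN : N = Matrix.fromBlocks (A - 1) (A * w) vR sB) :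
    (Tn - 1) * N.det = (1 - Tl * t ^ 2) * (A - 1).det := by
  classical
  have hAw : ∀ i, (A * w) i (0 : Fin 1) = A i (Fin.last l) * t := by
    intro i
    rw [Matrix.mul_apply]
    simp [hw, mul_ite, Finset.sum_ite_eq']
  have hS : ∑ i : Fin (l+1), ((TU c i.castSucc : Lau μ) - 1) * A i (Fin.last l)
      = (Tl - 1) - (Tn - 1) * v (Fin.last l) := by
    have hb' := hb (Fin.last l)
    simp only [Matrix.sub_apply, Matrix.one_apply, mul_sub, mul_ite, mul_one, mul_zero,
      Finset.sum_sub_distrib, Finset.sum_ite_eq', Finset.mem_univ, if_true] at hb'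
    rw [hTl]
    linear_combination hb'
  set uRow : (Fin (l+1) ⊕ Fin 1) → Lau μ :=
    Sum.elim 0 (fun _ => 1 - Tl * t ^ 2) with huRow
  have hrow : (Tn - 1) • N (Sum.inr 0)
      = uRow + ∑ i : Fin (l+1), (-((TU c i.castSucc : Lau μ) - 1)) • N (Sum.inl i) := by
    funext j
    rcases j with j | j
    · simp only [Pi.add_apply, Pi.smul_apply, smul_eq_mul, Sum.elim_inl, Pi.zero_apply,
        Finset.sum_apply, hN, Matrix.fromBlocks, Matrix.of_apply, Sum.elim_inl, Sum.elim_inr, Matrix.fromBlocks_apply₂₁, Matrix.fromBlocks_apply₁₁, hvR,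
        neg_mul, Finset.sum_neg_distrib, huRow]
      rw [hb j]
      ring
    · obtain rfl : j = (0 : Fin 1) := Subsingleton.elim _ _
      simp only [Pi.add_apply, Pi.smul_apply, smul_eq_mul, Sum.elim_inr,
        Finset.sum_apply, hN, Matrix.fromBlocks, Matrix.of_apply, Sum.elim_inl, Sum.elim_inr, Matrix.fromBlocks_apply₂₂, Matrix.fromBlocks_apply₁₂,
        hsB, hAw, neg_mul, Finset.sum_neg_distrib, huRow]
      have hsum : ∑ i : Fin (l+1), ((TU c i.castSucc : Lau μ) - 1) * (A i (Fin.last l) * t)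
          = (∑ i : Fin (l+1), ((TU c i.castSucc : Lau μ) - 1) * A i (Fin.last l)) * t := by
        rw [Finset.sum_mul]
        exact Finset.sum_congr rfl fun i _ => by ring
      rw [hsum, hS, hprod]
      ring
  have step1 : (Tn - 1) * N.det
      = (N.updateRow (Sum.inr 0) ((Tn - 1) • N (Sum.inr 0))).det := by
    rw [Matrix.det_updateRow_smul, Matrix.updateRow_eq_self]
  rw [step1, hrow, det_updateRow_add_sum_smul' N (Sum.inr 0) Finset.univ _ Sum.inl
    (fun i _ => Sum.inl_ne_inr) uRow]
  have hupd : N.updateRow (Sum.inr 0) uRow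
      = Matrix.fromBlocks (A - 1) (A * w) 0 (Matrix.of fun _ _ => (1 - Tl * t ^ 2 : Lau μ)) := by
    ext i j : 2
    rcases i with i | i
    · rw [Matrix.updateRow_ne Sum.inl_ne_inr]
      rcases j with j | j <;> simp [hN]
    · obtain rfl : i = (0 : Fin 1) := Subsingleton.elim _ _
      rw [Matrix.updateRow_self]
      rcases j with j | j <;> simp [huRow]
  rw [hupd, Matrix.det_fromBlocks_zero₂₁, Matrix.det_fin_one, Matrix.of_apply]
  ring

/-- the determinant identity for the positive stabilization. With
`t = t_{c_n}`, `M = [[A,0],[v,1]]` and `G` the identity except for the last `2×2`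
diagonal block `[[1,t],[0,−t]]`, if `(A,v)` satisfies the boundary relation for `c` then
`(T^c_n − 1) · det(M·G − I_n) = (1 − T^c_{n−1} t²) · det(A − I_{n−1})`
(here `n = l + 2 ≥ 2`). -/
theorem stmt4 {μ l : ℕ} (c : Fin (l+2) → Fin μ)
    (A : Matrix (Fin (l+1)) (Fin (l+1)) (Lau μ)) (v : Fin (l+1) → Lau μ)
    (hb : BoundaryRel c A v) :
    ((TU c (Fin.last (l+1)) : Lau μ) - 1) *
        (aug A v *
            last2Block l 1 (tU (c (Fin.last (l+1))) : Lau μ) 0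
              (-(tU (c (Fin.last (l+1))) : Lau μ)) - 1).det
      = (1 - (TU c ((Fin.last l).castSucc) : Lau μ) * (tU (c (Fin.last (l+1))) : Lau μ) ^ 2) *
          (A - 1).det := by
  classical
  set t : Lau μ := (tU (c (Fin.last (l+1))) : Lau μ) with ht
  set w : Matrix (Fin (l+1)) (Fin 1) (Lau μ) := fun i _ => if i = Fin.last l then t else 0 with hw
  set vR : Matrix (Fin 1) (Fin (l+1)) (Lau μ) := fun _ j => v j with hvR
  set sB : Matrix (Fin 1) (Fin 1) (Lau μ) := fun _ _ => v (Fin.last l) * t - t - 1 with hsB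
  set N : Matrix (Fin (l+1) ⊕ Fin 1) (Fin (l+1) ⊕ Fin 1) (Lau μ)
    := Matrix.fromBlocks (A - 1) (A * w) vR sB with hN
  have hprod : (TU c (Fin.last (l+1)) : Lau μ)
      = (TU c ((Fin.last l).castSucc) : Lau μ) * t := by
    rw [ht, TU_last_eq c]; rfl
  have hM : (aug A v).submatrix (finSumFinEquiv (m := l+1) (n := 1))
        (finSumFinEquiv (m := l+1) (n := 1))
      = Matrix.fromBlocks A 0 vR (1 : Matrix (Fin 1) (Fin 1) (Lau μ)) := by
    ext i j : 2
    rcases i with i | i <;> rcases j with j | j <;>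
      · simp only [Matrix.submatrix_apply, finSumFinEquiv_apply_left, finSumFinEquiv_apply_right,
          aug, Matrix.fromBlocks, Matrix.of_apply, Sum.elim_inl, Sum.elim_inr, Matrix.fromBlocks_apply₁₁, Matrix.fromBlocks_apply₁₂, Matrix.fromBlocks_apply₂₁,
          Matrix.fromBlocks_apply₂₂, Fin.coe_castAdd, Fin.coe_natAdd, hvR]
        have h1 := Fin.is_lt i
        have h2 := Fin.is_lt j
        split_ifs <;> first | rfl | omega | (simp_all [Fin.eta]; done) | (obtain rfl : i = j := Subsingleton.elim i j; simp [Matrix.one_apply])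
  have hG : (last2Block l 1 t 0 (-t)).submatrix (finSumFinEquiv (m := l+1) (n := 1))
        (finSumFinEquiv (m := l+1) (n := 1))
      = Matrix.fromBlocks 1 w 0 (Matrix.of fun _ _ => (-t : Lau μ)) := by
    ext i j : 2
    rcases i with i | i <;> rcases j with j | j <;>
      · simp only [Matrix.submatrix_apply, finSumFinEquiv_apply_left, finSumFinEquiv_apply_right,
          last2Block, Matrix.fromBlocks, Matrix.of_apply, Sum.elim_inl, Sum.elim_inr, Matrix.fromBlocks_apply₁₁, Matrix.fromBlocks_apply₁₂,
          Matrix.fromBlocks_apply₂₁, Matrix.fromBlocks_apply₂₂, Fin.coe_castAdd, Fin.coe_natAdd,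
          Matrix.one_apply, Matrix.zero_apply, Fin.ext_iff, Fin.val_last, hw]
        have h1 := Fin.is_lt i
        have h2 := Fin.is_lt j
        split_ifs <;> first | rfl | omega
  have hAw : ∀ i, (A * w) i (0 : Fin 1) = A i (Fin.last l) * t := by
    intro i
    rw [Matrix.mul_apply]
    simp [hw, mul_ite, Finset.sum_ite_eq']
  have hvw : (vR * w) 0 0 = v (Fin.last l) * t := by
    rw [Matrix.mul_apply]
    simp [hw, hvR, mul_ite, Finset.sum_ite_eq']
  have hdet : (aug A v * last2Block l 1 t 0 (-t) - 1).det = N.det := by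
    rw [← Matrix.det_submatrix_equiv_self (finSumFinEquiv (m := l+1) (n := 1)),
      Matrix.submatrix_sub, Pi.sub_apply, Pi.sub_apply, Matrix.submatrix_one_equiv,
      ← Matrix.submatrix_mul_equiv _ _ _ (finSumFinEquiv (m := l+1) (n := 1)) _, hM, hG,
      Matrix.fromBlocks_multiply]
    congr 1
    ext i j : 2
    rcases i with i | i <;> rcases j with j | j <;>
      simp [hN, Matrix.fromBlocks, Matrix.of_apply, Matrix.sub_apply, Matrix.one_apply, hsB, hAw, Matrix.mul_apply, hvw, sub_eq_add_neg,
        mul_ite, Finset.sum_ite_eq', Fin.fin_one_eq_zero] <;> ring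
  rw [hdet]
  exact stmt4_aux c t _ _ A v hb rfl hprod w hw vR hvR sB hsB N hN
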